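/- Assume 0 ≤ λ < λ̃. Then the spread s ↦ P̃(s) − P(s) is nonnegative and nondecreasing on (0, ∞), and P̃(s) − P(s) → (λ̃/(r+λ̃) − λ/(r+λ))·K > 0 as s → ∞. In particular the buyer's timing-option value Ĵ admits the constant upper bound (λ̃/(r+λ̃) − λ/(r+λ))·K. -/

import Mathlib

open Real Filter

/-- `θ = 2(r+λ)/σ²`. -/
noncomputable def perpTheta (r lam sigma : ℝ) : ℝ := 2 * (r + lam) / sigma ^ 2

/-- Optimal exercise threshold `b* = 2rK/(2(r+λ) + σ²)`. -/
noncomputable def perpBstar (r lam sigma K : ℝ) : ℝ := 2 * r * K / (2 * (r + lam) + sigma ^ 2)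

/-- Market price of a perpetual American put (strike `K`) on a defaultable stock
with constant default intensity `λ`. -/
noncomputable def perpPut (r lam sigma K s : ℝ) : ℝ :=
  if s ≤ perpBstar r lam sigma K then K - s
  else (r * K / ((r + lam) * (perpTheta r lam sigma + 1)))
        * (s / perpBstar r lam sigma K) ^ (-(perpTheta r lam sigma)) + lam * K / (r + lam)

/-- The function `B(s) = (r+λ)·(b̃*/s)^{θ̃} − (r+λ̃)·(b*/s)^{θ} + (λ̃ − λ)`. -/
noncomputable def purchaseB (r lam lamt sigma K s : ℝ) : ℝ :=
  (r + lam) * (perpBstar r lamt sigma K / s) ^ perpTheta r lamt sigma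
    - (r + lamt) * (perpBstar r lam sigma K / s) ^ perpTheta r lam sigma
    + (lamt - lam)

/-- Candidate value `Ĵ` of the buyer's timing option:
`Ĵ(s) = A·s` for `0 < s < s*` and `Ĵ(s) = P̃(s) − P(s)` for `s ≥ s*`. -/
noncomputable def Jhat (r lam lamt sigma K sstar A s : ℝ) : ℝ :=
  if s < sstar then A * s else perpPut r lamt sigma K s - perpPut r lam sigma K s

/-! ### Auxiliary definitions and lemmas -/

/-- The continuation-region formula for the perpetual put. -/
noncomputable def perpCont (r lam sigma K s : ℝ) : ℝ :=
  (r * K / ((r + lam) * (perpTheta r lam sigma + 1)))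
        * (s / perpBstar r lam sigma K) ^ (-(perpTheta r lam sigma)) + lam * K / (r + lam)

/-- The derivative of the perpetual put price. -/
noncomputable def perpPutD (r lam sigma K s : ℝ) : ℝ :=
  -(min (perpBstar r lam sigma K / s) 1) ^ (perpTheta r lam sigma + 1)

namespace PerpAux

variable {r lam lamt sigma K : ℝ}

lemma thetaPos (hr : 0 < r) (hl : 0 ≤ lam) (hs : 0 < sigma) : 0 < perpTheta r lam sigma := by
  unfold perpTheta
  exact div_pos (by nlinarith) (by positivity)

lemma bstarPos (hr : 0 < r) (hl : 0 ≤ lam) (hs : 0 < sigma) (hK : 0 < K) :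
    0 < perpBstar r lam sigma K := by
  unfold perpBstar
  exact div_pos (by nlinarith) (by nlinarith)

lemma bstar_le (hr : 0 < r) (hl : 0 ≤ lam) (hlt : lam ≤ lamt) (hs : 0 < sigma) (hK : 0 < K) :
    perpBstar r lamt sigma K ≤ perpBstar r lam sigma K := by
  unfold perpBstar
  apply div_le_div_of_nonneg_left (by positivity) (by nlinarith) (by nlinarith)

lemma thetaC (hr : 0 < r) (hl : 0 ≤ lam) (hs : 0 < sigma) (hK : 0 < K) :
    perpTheta r lam sigma * (r * K / ((r + lam) * (perpTheta r lam sigma + 1)))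
      = perpBstar r lam sigma K := by
  unfold perpTheta perpBstar
  have h1 : (0:ℝ) < r + lam := by linarith
  have h2 : (0:ℝ) < sigma ^ 2 := by positivity
  have h3 : (0:ℝ) < 2 * (r + lam) + sigma ^ 2 := by nlinarith
  field_simp

lemma contAtB (hr : 0 < r) (hl : 0 ≤ lam) (hs : 0 < sigma) (hK : 0 < K) :
    r * K / ((r + lam) * (perpTheta r lam sigma + 1)) + lam * K / (r + lam)
      = K - perpBstar r lam sigma K := by
  unfold perpTheta perpBstar
  have h1 : (0:ℝ) < r + lam := by linarith
  have h2 : (0:ℝ) < sigma ^ 2 := by positivity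
  have h3 : (0:ℝ) < 2 * (r + lam) + sigma ^ 2 := by nlinarith
  field_simp
  ring

lemma Csplit (hr : 0 < r) (hl : 0 ≤ lam) (hs : 0 < sigma) :
    r * K / ((r + lam) * (perpTheta r lam sigma + 1))
      = r * K / (r + lam) - perpBstar r lam sigma K := by
  unfold perpTheta perpBstar
  have h1 : (0:ℝ) < r + lam := by linarith
  have h2 : (0:ℝ) < sigma ^ 2 := by positivity
  have h3 : (0:ℝ) < 2 * (r + lam) + sigma ^ 2 := by nlinarith
  field_simp
  ring

lemma rpow_flip {x y t : ℝ} (hx : 0 < x) (hy : 0 < y) : (x / y) ^ (-t) = (y / x) ^ t := by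
  rw [Real.rpow_neg (by positivity), ← Real.inv_rpow (by positivity), inv_div]

lemma alg (hr : 0 < r) (hl : 0 ≤ lam) (hlt : lam < lamt)
    (hs : 0 < sigma) (hK : 0 < K) (X Xt : ℝ)
    (h : (r + lam) * Xt - (r + lamt) * X + (lamt - lam) = 0) :
    perpBstar r lam sigma K * X - perpBstar r lamt sigma K * Xt
      = (r * K / ((r + lamt) * (perpTheta r lamt sigma + 1)) * Xt + lamt * K / (r + lamt))
        - (r * K / ((r + lam) * (perpTheta r lam sigma + 1)) * X + lam * K / (r + lam)) := by
  have h1 : (0:ℝ) < r + lam := by linarith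
  have h2 : (0:ℝ) < r + lamt := by linarith
  rw [Csplit hr hl hs, Csplit hr (le_of_lt (lt_of_le_of_lt hl hlt)) hs]
  field_simp
  linear_combination (-(r*K)) * h

lemma contDeriv (hr : 0 < r) (hl : 0 ≤ lam) (hs : 0 < sigma) (hK : 0 < K)
    {s : ℝ} (hs0 : 0 < s) :
    HasDerivAt (perpCont r lam sigma K)
      (-(perpBstar r lam sigma K / s) ^ (perpTheta r lam sigma + 1)) s := by
  set b := perpBstar r lam sigma K with hb
  set θ := perpTheta r lam sigma with hθ
  have hbpos : 0 < b := bstarPos hr hl hs hK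
  have hθpos : 0 < θ := thetaPos hr hl hs
  have hdiv : HasDerivAt (fun t : ℝ => t / b) (1 / b) s := by
    simpa using (hasDerivAt_id s).div_const b
  have hne : s / b ≠ 0 := by positivity
  have h1 : HasDerivAt (fun t : ℝ => (t / b) ^ (-θ))
      (1 / b * (-θ) * (s / b) ^ (-θ - 1)) s := hdiv.rpow_const (Or.inl hne)
  set C := r * K / ((r + lam) * (θ + 1)) with hC
  have h2 : HasDerivAt (perpCont r lam sigma K)
      (C * (1 / b * (-θ) * (s / b) ^ (-θ - 1))) s := by
    unfold perpCont
    exact (h1.const_mul C).add_const _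
  convert h2 using 1
  have hCθ : θ * C = b := thetaC hr hl hs hK
  have key : (s / b) ^ (-θ - 1) = ((b / s) ^ (θ + 1)) := by
    rw [show -θ - 1 = -(θ + 1) by ring, Real.rpow_neg (by positivity),
      ← Real.inv_rpow (by positivity), inv_div]
  rw [key]
  field_simp
  nlinarith [Real.rpow_pos_of_pos (show (0:ℝ) < b / s by positivity) (θ + 1), hCθ]

lemma put_eqOn_Ici (hr : 0 < r) (hl : 0 ≤ lam) (hs : 0 < sigma) (hK : 0 < K) :
    Set.EqOn (perpPut r lam sigma K) (perpCont r lam sigma K)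
      (Set.Ici (perpBstar r lam sigma K)) := by
  intro t ht
  rcases eq_or_lt_of_le (Set.mem_Ici.mp ht) with h | h
  · unfold perpPut perpCont
    rw [if_pos h.symm.le, ← h, div_self (bstarPos hr hl hs hK).ne', Real.one_rpow, mul_one]
    rw [← contAtB hr hl hs hK]
  · unfold perpPut perpCont
    rw [if_neg (not_le.mpr h)]

lemma putDeriv (hr : 0 < r) (hl : 0 ≤ lam) (hs : 0 < sigma) (hK : 0 < K)
    {s : ℝ} (hs0 : 0 < s) :
    HasDerivAt (perpPut r lam sigma K) (perpPutD r lam sigma K s) s := by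
  set b := perpBstar r lam sigma K with hb
  set θ := perpTheta r lam sigma with hθ
  have hbpos : 0 < b := bstarPos hr hl hs hK
  have hlin : HasDerivAt (fun t : ℝ => K - t) (-1) s := by
    simpa using (hasDerivAt_id' s).const_sub K
  rcases lt_trichotomy s b with h | h | h
  · have hD : perpPutD r lam sigma K s = -1 := by
      unfold perpPutD
      rw [min_eq_right (by rw [le_div_iff₀ hs0]; linarith), Real.one_rpow]
    rw [hD]
    apply hlin.congr_of_eventuallyEq
    filter_upwards [Iio_mem_nhds h] with t ht
    exact if_pos (le_of_lt ht)
  · have hD : perpPutD r lam sigma K s = -1 := by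
      unfold perpPutD
      rw [h, div_self hbpos.ne', min_self, Real.one_rpow]
    rw [hD]
    subst h
    rw [← hasDerivWithinAt_univ, ← Set.Iic_union_Ici (a := b)]
    apply HasDerivWithinAt.union
    · refine hlin.hasDerivWithinAt.congr (fun t ht => ?_) ?_
      · exact if_pos (Set.mem_Iic.mp ht)
      · exact if_pos le_rfl
    · have hc := (contDeriv hr hl hs hK hs0).hasDerivWithinAt (s := Set.Ici b)
      rw [div_self hbpos.ne', Real.one_rpow] at hc
      exact hc.congr (put_eqOn_Ici hr hl hs hK) (put_eqOn_Ici hr hl hs hK Set.self_mem_Ici)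
  · have hD : perpPutD r lam sigma K s = -(b / s) ^ (θ + 1) := by
      unfold perpPutD
      rw [min_eq_left (by rw [div_le_one hs0]; linarith)]
    rw [hD]
    apply (contDeriv hr hl hs hK hs0).congr_of_eventuallyEq
    filter_upwards [Ioi_mem_nhds h] with t ht
    exact if_neg (not_le.mpr ht)

lemma DNonneg (hr : 0 < r) (hl : 0 ≤ lam) (hlt : lam < lamt) (hs : 0 < sigma) (hK : 0 < K)
    {s : ℝ} (hs0 : 0 < s) :
    0 ≤ perpPutD r lamt sigma K s - perpPutD r lam sigma K s := by
  have hl' : (0:ℝ) ≤ lamt := le_of_lt (lt_of_le_of_lt hl hlt)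
  unfold perpPutD
  rw [sub_neg_eq_add, neg_add_eq_sub, sub_nonneg]
  have hb1 : 0 < perpBstar r lamt sigma K := bstarPos hr hl' hs hK
  have hb2 : perpBstar r lamt sigma K ≤ perpBstar r lam sigma K :=
    bstar_le hr hl hlt.le hs hK
  have hθ : perpTheta r lam sigma ≤ perpTheta r lamt sigma := by
    unfold perpTheta
    apply div_le_div_of_nonneg_right (by nlinarith) (by positivity)
  have hm1 : (0:ℝ) < min (perpBstar r lam sigma K / s) 1 := by
    have : 0 < perpBstar r lam sigma K / s := by
      have := bstarPos hr hl hs hK; positivity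
    exact lt_min this one_pos
  calc min (perpBstar r lamt sigma K / s) 1 ^ (perpTheta r lamt sigma + 1)
      ≤ min (perpBstar r lam sigma K / s) 1 ^ (perpTheta r lamt sigma + 1) := by
        apply Real.rpow_le_rpow (le_min (by positivity) zero_le_one)
          (min_le_min ((div_le_div_iff_of_pos_right hs0).mpr hb2) le_rfl)
          (by nlinarith [thetaPos hr hl' hs])
    _ ≤ min (perpBstar r lam sigma K / s) 1 ^ (perpTheta r lam sigma + 1) := by
        apply Real.rpow_le_rpow_of_exponent_ge hm1 (min_le_right _ _) (by linarith)

lemma spread_mono (hr : 0 < r) (hl : 0 ≤ lam) (hlt : lam < lamt) (hs : 0 < sigma) (hK : 0 < K) :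
    MonotoneOn (fun s => perpPut r lamt sigma K s - perpPut r lam sigma K s) (Set.Ioi 0) := by
  have hl' : (0:ℝ) ≤ lamt := le_of_lt (lt_of_le_of_lt hl hlt)
  have key : ∀ s ∈ Set.Ioi (0:ℝ),
      HasDerivAt (fun s => perpPut r lamt sigma K s - perpPut r lam sigma K s)
        (perpPutD r lamt sigma K s - perpPutD r lam sigma K s) s := fun s hs0 =>
    (putDeriv hr hl' hs hK hs0).sub (putDeriv hr hl hs hK hs0)
  apply monotoneOn_of_deriv_nonneg (convex_Ioi 0)
  · exact fun s hs0 => (key s hs0).continuousAt.continuousWithinAt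
  · intro s hs0
    rw [interior_Ioi] at hs0
    exact (key s hs0).differentiableAt.differentiableWithinAt
  · intro s hs0
    rw [interior_Ioi] at hs0
    rw [(key s hs0).deriv]
    exact DNonneg hr hl hlt hs hK hs0

end PerpAux

open PerpAux in
/-- **Monotonicity and asymptotics of the perpetual-put spread.**
Assume `0 ≤ λ < λ̃`.  Then `s ↦ P̃(s) − P(s)` is nonnegative and nondecreasing
on `(0,∞)` and tends to `(λ̃/(r+λ̃) − λ/(r+λ))·K > 0` as `s → ∞`.  In particular
the buyer's timing-option value `Ĵ` admits the constant upper bound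
`(λ̃/(r+λ̃) − λ/(r+λ))·K`. -/
theorem perpPut_spread_monotone_bounded
    (r lam lamt sigma K : ℝ) (hr : 0 < r) (hsigma : 0 < sigma) (hK : 0 < K)
    (hlam : 0 ≤ lam) (hlt : lam < lamt)
    (sstar : ℝ) (hsstar : sstar ∈ Set.Ioi (perpBstar r lam sigma K))
    (hroot : purchaseB r lam lamt sigma K sstar = 0)
    (A : ℝ)
    (hA : A = r * K * perpTheta r lam sigma
            / ((r + lam) * (perpTheta r lam sigma + 1) * sstar)
            * (perpBstar r lam sigma K / sstar) ^ perpTheta r lam sigma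
          - r * K * perpTheta r lamt sigma
            / ((r + lamt) * (perpTheta r lamt sigma + 1) * sstar)
            * (perpBstar r lamt sigma K / sstar) ^ perpTheta r lamt sigma) :
    (∀ s ∈ Set.Ioi (0 : ℝ), 0 ≤ perpPut r lamt sigma K s - perpPut r lam sigma K s)
    ∧ MonotoneOn (fun s => perpPut r lamt sigma K s - perpPut r lam sigma K s)
        (Set.Ioi 0)
    ∧ Tendsto (fun s => perpPut r lamt sigma K s - perpPut r lam sigma K s)
        atTop (nhds ((lamt / (r + lamt) - lam / (r + lam)) * K))
    ∧ 0 < (lamt / (r + lamt) - lam / (r + lam)) * K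
    ∧ ∀ s ∈ Set.Ioi (0 : ℝ),
        Jhat r lam lamt sigma K sstar A s
          ≤ (lamt / (r + lamt) - lam / (r + lam)) * K := by
  have hl' : (0:ℝ) ≤ lamt := le_of_lt (lt_of_le_of_lt hlam hlt)
  have hr1 : (0:ℝ) < r + lam := by linarith
  have hr2 : (0:ℝ) < r + lamt := by linarith
  have hbpos : 0 < perpBstar r lam sigma K := bstarPos hr hlam hsigma hK
  have hbtpos : 0 < perpBstar r lamt sigma K := bstarPos hr hl' hsigma hK
  have hbb : perpBstar r lamt sigma K ≤ perpBstar r lam sigma K :=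
    bstar_le hr hlam hlt.le hsigma hK
  have hss : perpBstar r lam sigma K < sstar := Set.mem_Ioi.mp hsstar
  have hsspos : 0 < sstar := lt_trans hbpos hss
  have hmono := spread_mono (lamt := lamt) hr hlam hlt hsigma hK
  -- Nonnegativity
  have hnonneg : ∀ s ∈ Set.Ioi (0:ℝ),
      0 ≤ perpPut r lamt sigma K s - perpPut r lam sigma K s := by
    intro s hs0
    rcases le_or_gt s (perpBstar r lamt sigma K) with h | h
    · unfold perpPut
      rw [if_pos h, if_pos (h.trans hbb)]
      simp
    · have h0 : perpPut r lamt sigma K (perpBstar r lamt sigma K)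
          - perpPut r lam sigma K (perpBstar r lamt sigma K) = 0 := by
        unfold perpPut
        rw [if_pos le_rfl, if_pos hbb]
        simp
      have := hmono (Set.mem_Ioi.mpr hbtpos) hs0 h.le
      simpa [h0] using this
  -- Limit
  have htend : Tendsto (fun s => perpPut r lamt sigma K s - perpPut r lam sigma K s)
      atTop (nhds ((lamt / (r + lamt) - lam / (r + lam)) * K)) := by
    have tb : Tendsto (fun s : ℝ => perpCont r lamt sigma K s) atTop
        (nhds (lamt * K / (r + lamt))) := by
      have t1 : Tendsto (fun s : ℝ => (s / perpBstar r lamt sigma K)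
          ^ (-(perpTheta r lamt sigma))) atTop (nhds 0) :=
        (tendsto_rpow_neg_atTop (thetaPos hr hl' hsigma)).comp
          (tendsto_id.atTop_div_const hbtpos)
      have := (t1.const_mul
          (r * K / ((r + lamt) * (perpTheta r lamt sigma + 1)))).add_const
          (lamt * K / (r + lamt))
      simpa [perpCont] using this
    have ta : Tendsto (fun s : ℝ => perpCont r lam sigma K s) atTop
        (nhds (lam * K / (r + lam))) := by
      have t1 : Tendsto (fun s : ℝ => (s / perpBstar r lam sigma K)
          ^ (-(perpTheta r lam sigma))) atTop (nhds 0) :=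
        (tendsto_rpow_neg_atTop (thetaPos hr hlam hsigma)).comp
          (tendsto_id.atTop_div_const hbpos)
      have := (t1.const_mul
          (r * K / ((r + lam) * (perpTheta r lam sigma + 1)))).add_const
          (lam * K / (r + lam))
      simpa [perpCont] using this
    have heq : (fun s => perpCont r lamt sigma K s - perpCont r lam sigma K s)
        =ᶠ[atTop] (fun s => perpPut r lamt sigma K s - perpPut r lam sigma K s) := by
      filter_upwards [eventually_gt_atTop (perpBstar r lam sigma K)] with s hsb
      have h1 : perpPut r lam sigma K s = perpCont r lam sigma K s := by
        unfold perpPut perpCont; rw [if_neg (not_le.mpr hsb)]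
      have h2 : perpPut r lamt sigma K s = perpCont r lamt sigma K s := by
        unfold perpPut perpCont; rw [if_neg (not_le.mpr (lt_of_le_of_lt hbb hsb))]
      rw [h1, h2]
    have := (tb.sub ta).congr' heq
    convert this using 2
    ring
  -- Positivity of the limit
  have hLpos : 0 < (lamt / (r + lamt) - lam / (r + lam)) * K := by
    apply mul_pos _ hK
    rw [sub_pos, div_lt_div_iff₀ hr1 hr2]
    nlinarith
  -- spread bounded by the limit
  have hLbound : ∀ s ∈ Set.Ioi (0:ℝ),
      perpPut r lamt sigma K s - perpPut r lam sigma K s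
        ≤ (lamt / (r + lamt) - lam / (r + lam)) * K := by
    intro s hs0
    apply ge_of_tendsto htend
    filter_upwards [eventually_ge_atTop s] with t ht
    exact hmono hs0 (Set.mem_Ioi.mpr (lt_of_lt_of_le hs0 ht)) ht
  refine ⟨hnonneg, hmono, htend, hLpos, ?_⟩
  -- The Jhat bound
  intro s hs0
  have hbs1 : perpBstar r lam sigma K / sstar ≤ 1 := by
    rw [div_le_one hsspos]; linarith
  have hbs2 : perpBstar r lamt sigma K / sstar ≤ 1 := by
    rw [div_le_one hsspos]; linarith
  have hA' : A = (perpBstar r lam sigma K / sstar) ^ (perpTheta r lam sigma + 1)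
      - (perpBstar r lamt sigma K / sstar) ^ (perpTheta r lamt sigma + 1) := by
    rw [hA]
    have e1 : r * K * perpTheta r lam sigma
        / ((r + lam) * (perpTheta r lam sigma + 1) * sstar)
        = perpBstar r lam sigma K / sstar := by
      rw [← thetaC hr hlam hsigma hK]
      have hθ1 : (0:ℝ) < perpTheta r lam sigma + 1 := by
        have := thetaPos hr hlam hsigma; linarith
      field_simp
    have e2 : r * K * perpTheta r lamt sigma
        / ((r + lamt) * (perpTheta r lamt sigma + 1) * sstar)
        = perpBstar r lamt sigma K / sstar := by
      rw [← thetaC hr hl' hsigma hK]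
      have hθ1 : (0:ℝ) < perpTheta r lamt sigma + 1 := by
        have := thetaPos hr hl' hsigma; linarith
      field_simp
    rw [e1, e2, Real.rpow_add_one (by positivity), Real.rpow_add_one (by positivity)]
    ring
  have hA0 : 0 ≤ A := by
    have hD := DNonneg hr hlam hlt hsigma hK hsspos
    unfold perpPutD at hD
    rw [min_eq_left hbs1, min_eq_left hbs2] at hD
    rw [hA']
    linarith
  have hmatch : A * sstar
      = perpPut r lamt sigma K sstar - perpPut r lam sigma K sstar := by
    have hput1 : perpPut r lam sigma K sstar
        = r * K / ((r + lam) * (perpTheta r lam sigma + 1))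
          * (perpBstar r lam sigma K / sstar) ^ perpTheta r lam sigma
          + lam * K / (r + lam) := by
      unfold perpPut
      rw [if_neg (not_le.mpr hss), rpow_flip hsspos hbpos]
    have hput2 : perpPut r lamt sigma K sstar
        = r * K / ((r + lamt) * (perpTheta r lamt sigma + 1))
          * (perpBstar r lamt sigma K / sstar) ^ perpTheta r lamt sigma
          + lamt * K / (r + lamt) := by
      unfold perpPut
      rw [if_neg (not_le.mpr (lt_of_le_of_lt hbb hss)), rpow_flip hsspos hbtpos]
    rw [hput1, hput2]
    unfold purchaseB at hroot
    have halg := alg hr hlam hlt hsigma hK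
      ((perpBstar r lam sigma K / sstar) ^ perpTheta r lam sigma)
      ((perpBstar r lamt sigma K / sstar) ^ perpTheta r lamt sigma) hroot
    rw [← halg, hA', Real.rpow_add_one (by positivity), Real.rpow_add_one (by positivity)]
    field_simp
  unfold Jhat
  split_ifs with hcase
  · calc A * s ≤ A * sstar := mul_le_mul_of_nonneg_left hcase.le hA0
      _ = perpPut r lamt sigma K sstar - perpPut r lam sigma K sstar := hmatch
      _ ≤ (lamt / (r + lamt) - lam / (r + lam)) * K :=
        hLbound sstar (Set.mem_Ioi.mpr hsspos)
  · exact hLbound s hs0
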